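/- Let a₁, a₂, a₃ be real numbers with a₁ ≠ 0, a₂ ≠ 0 and with a₁², a₂², a₃² pairwise distinct. Then for every real t, ∫₀ᵗ (sin((t−s₁)a₁)/a₁) · ( ∫₀^{s₁} (sin((s₁−s₂)a₂)/a₂) · cos(s₂a₃) ds₂ ) ds₁ = (cos(t a₂) − cos(t a₁))/((a₂² − a₁²)(a₂² − a₃²)) + (cos(t a₃) − cos(t a₁))/((a₃² − a₁²)(a₃² − a₂²)). -/

import Mathlib

open Real intervalIntegral

lemma key_conv (a b t : ℝ) (ha : a ≠ 0) (hab : a ^ 2 ≠ b ^ 2) :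
    (∫ s in (0:ℝ)..t, Real.sin ((t - s) * a) / a * Real.cos (s * b))
      = (Real.cos (t * b) - Real.cos (t * a)) / (a ^ 2 - b ^ 2) := by
  have hm : a - b ≠ 0 := by
    intro h; apply hab; have : a = b := by linarith
    rw [this]
  have hp : a + b ≠ 0 := by
    intro h; apply hab; have : a = -b := by linarith
    rw [this]; ring
  have h :=
    intervalIntegral.integral_eq_sub_of_hasDerivAt
      (f := fun s => (Real.cos (t * a - (a - b) * s) / (a - b)
          + Real.cos (t * a - (a + b) * s) / (a + b)) / (2 * a))
      (f' := fun s => Real.sin ((t - s) * a) / a * Real.cos (s * b))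
      (a := (0:ℝ)) (b := t)
      (fun s _ => by
        have d1 : HasDerivAt (fun s : ℝ => t * a - (a - b) * s) (-(a - b)) s := by
          simpa using ((hasDerivAt_id s).const_mul (a - b)).const_sub (t * a)
        have d2 : HasDerivAt (fun s : ℝ => t * a - (a + b) * s) (-(a + b)) s := by
          simpa using ((hasDerivAt_id s).const_mul (a + b)).const_sub (t * a)
        have := (((d1.cos.div_const (a - b)).add (d2.cos.div_const (a + b))).div_const (2 * a))
        convert this using 1
        · rfl
        · rfl
        have e1 : t * a - (a - b) * s = (t - s) * a + s * b := by ring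
        have e2 : t * a - (a + b) * s = (t - s) * a - s * b := by ring
        rw [e1, e2, Real.sin_add, Real.sin_sub]
        field_simp
        ring)
      (by
        apply Continuous.intervalIntegrable
        fun_prop)
  rw [h]
  have e0 : t * a - (a - b) * t = t * b := by ring
  have e1 : t * a - (a + b) * t = -(t * b) := by ring
  simp only [e0, e1, Real.cos_neg, mul_zero, sub_zero, Real.cos_zero]
  have hd : a ^ 2 - b ^ 2 ≠ 0 := sub_ne_zero.mpr hab
  field_simp [hm, hp, hd]
  ring

theorem stmt_2 (a₁ a₂ a₃ : ℝ) (h1 : a₁ ≠ 0) (h2 : a₂ ≠ 0)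
    (h12 : a₁ ^ 2 ≠ a₂ ^ 2) (h13 : a₁ ^ 2 ≠ a₃ ^ 2) (h23 : a₂ ^ 2 ≠ a₃ ^ 2) (t : ℝ) :
    (∫ s₁ in (0:ℝ)..t, (Real.sin ((t - s₁) * a₁) / a₁) *
        ∫ s₂ in (0:ℝ)..s₁, (Real.sin ((s₁ - s₂) * a₂) / a₂) * Real.cos (s₂ * a₃))
      = (Real.cos (t * a₂) - Real.cos (t * a₁)) / ((a₂ ^ 2 - a₁ ^ 2) * (a₂ ^ 2 - a₃ ^ 2))
        + (Real.cos (t * a₃) - Real.cos (t * a₁)) / ((a₃ ^ 2 - a₁ ^ 2) * (a₃ ^ 2 - a₂ ^ 2)) := by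
  have hc : a₂ ^ 2 - a₃ ^ 2 ≠ 0 := sub_ne_zero.mpr h23
  have hc12 : a₁ ^ 2 - a₂ ^ 2 ≠ 0 := sub_ne_zero.mpr h12
  have hc13 : a₁ ^ 2 - a₃ ^ 2 ≠ 0 := sub_ne_zero.mpr h13
  have step1 : (∫ s₁ in (0:ℝ)..t, (Real.sin ((t - s₁) * a₁) / a₁) *
        ∫ s₂ in (0:ℝ)..s₁, (Real.sin ((s₁ - s₂) * a₂) / a₂) * Real.cos (s₂ * a₃))
      = ∫ s₁ in (0:ℝ)..t, (Real.sin ((t - s₁) * a₁) / a₁ * Real.cos (s₁ * a₃)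
          - Real.sin ((t - s₁) * a₁) / a₁ * Real.cos (s₁ * a₂)) / (a₂ ^ 2 - a₃ ^ 2) := by
    apply intervalIntegral.integral_congr
    intro s₁ _
    dsimp only
    rw [key_conv a₂ a₃ s₁ h2 h23]
    field_simp
  rw [step1]
  rw [intervalIntegral.integral_div]
  rw [intervalIntegral.integral_sub
    (by apply Continuous.intervalIntegrable; fun_prop)
    (by apply Continuous.intervalIntegrable; fun_prop)]
  rw [key_conv a₁ a₃ t h1 h13, key_conv a₁ a₂ t h1 h12]
  have hc21 : a₂ ^ 2 - a₁ ^ 2 ≠ 0 := fun h => hc12 (by linarith)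
  have hc31 : a₃ ^ 2 - a₁ ^ 2 ≠ 0 := fun h => hc13 (by linarith)
  have hc32 : a₃ ^ 2 - a₂ ^ 2 ≠ 0 := fun h => hc (by linarith)
  field_simp [hc, hc12, hc13, hc21, hc31, hc32]
  ring
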